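/- If a real normed vector space X satisfies the Ptolemaic inequality ‖x1 − x2‖·‖x3 − x4‖ ≤ ‖x2 − x4‖·‖x1 − x3‖ + ‖x1 − x4‖·‖x2 − x3‖ for all x1, x2, x3, x4 ∈ X, then its norm satisfies the parallelogram law: ‖x + y‖² + ‖x − y‖² = 2‖x‖² + 2‖y‖² for all x, y ∈ X (hence the norm is induced by an inner product). -/

import Mathlib

open Real Filter Set Topology

private lemma dyadic_aux (Z : Set ℝ) (hcl : IsClosed Z)
    (m : ℝ) (hm : 0 < m)
    (h0 : (0:ℝ) ∈ Z)
    (hstep : ∀ z ∈ Z, z + Real.sqrt (z^2+m) ∈ Z ∧ z - Real.sqrt (z^2+m) ∈ Z) :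
    ∀ σ : ℝ, σ ∈ Z := by
  have hsqm : 0 < Real.sqrt m := Real.sqrt_pos.mpr hm
  set G : ℝ → ℝ := fun q => Real.sqrt m * (Real.cos (q*π) / Real.sin (q*π)) with hG
  have L1 : ∀ q : ℝ, 0 < q → q < 1 → G q ∈ Z → G (q/2) ∈ Z ∧ G ((q+1)/2) ∈ Z := by
    intro q hq0 hq1 hz
    set u := q*π/2 with hu
    have hu0 : 0 < u := by have := pi_pos; positivity
    have hupi : u < π/2 := by
      have := pi_pos; rw [hu]; nlinarith
    have hs2 : 0 < Real.sin u := Real.sin_pos_of_pos_of_lt_pi hu0 (by nlinarith [pi_pos])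
    have hc2 : 0 < Real.cos u := Real.cos_pos_of_mem_Ioo ⟨by nlinarith [pi_pos], hupi⟩
    have h2u : q*π = 2*u := by rw [hu]; ring
    have hsin : Real.sin (q*π) = 2*Real.sin u*Real.cos u := by
      rw [h2u, Real.sin_two_mul]
    have hcos : Real.cos (q*π) = 2*Real.cos u^2 - 1 := by
      rw [h2u, Real.cos_two_mul]
    have hsinpos : 0 < Real.sin (q*π) := by rw [hsin]; positivity
    have hm' : Real.sqrt m ^2 = m := Real.sq_sqrt hm.le
    have hpy : Real.sin u^2 + Real.cos u^2 = 1 := Real.sin_sq_add_cos_sq u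
    have hzsq : (G q)^2 + m = (Real.sqrt m / Real.sin (q*π))^2 := by
      simp only [hG]; field_simp
      linear_combination m * Real.sin_sq_add_cos_sq (q*π) + (Real.cos (q*π)^2 - 1) * hm'
    have hsqrt : Real.sqrt ((G q)^2+m) = Real.sqrt m / Real.sin (q*π) := by
      rw [hzsq, Real.sqrt_sq (by positivity)]
    constructor
    · have h := (hstep (G q) hz).1
      have e1 : q/2*π = u := by rw [hu]; ring
      have : G q + Real.sqrt ((G q)^2+m) = G (q/2) := by
        rw [hsqrt]
        simp only [hG, e1]
        rw [hsin, hcos]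
        field_simp
        ring
      exact this ▸ h
    · have h := (hstep (G q) hz).2
      have e2 : (q+1)/2*π = u + π/2 := by rw [hu]; ring
      have hcu : Real.cos (u + π/2) = -Real.sin u := by
        rw [Real.cos_add, Real.cos_pi_div_two, Real.sin_pi_div_two]; ring
      have hsu : Real.sin (u + π/2) = Real.cos u := by
        rw [Real.sin_add, Real.cos_pi_div_two, Real.sin_pi_div_two]; ring
      have : G q - Real.sqrt ((G q)^2+m) = G ((q+1)/2) := by
        rw [hsqrt]
        simp only [hG, e2, hcu, hsu]
        rw [hsin, hcos]
        field_simp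
        linear_combination 2 * hpy
      exact this ▸ h
  have L2 : ∀ n k : ℕ, 0 < k → k < 2^n → G ((k:ℝ)/2^n) ∈ Z := by
    intro n
    induction n with
    | zero => intro k h1 h2; omega
    | succ n IH =>
      intro k hk0 hk2
      have hpow : (0:ℝ) < 2^n := by positivity
      rcases Nat.even_or_odd k with ⟨j, hj⟩ | hodd
      · have hj0 : 0 < j := by omega
        have hj2 : j < 2^n := by
          subst hj; rw [pow_succ] at hk2; omega
        have e : ((k:ℝ))/2^(n+1) = (j:ℝ)/2^n := by
          subst hj; push_cast; ring
        rw [e]; exact IH j hj0 hj2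
      · rcases lt_trichotomy k (2^n) with hlt | heq | hgt
        · have hq0 : (0:ℝ) < (k:ℝ)/2^n := by positivity
          have hq1 : (k:ℝ)/2^n < 1 := by
            rw [div_lt_one hpow]; exact_mod_cast hlt
          have h := (L1 ((k:ℝ)/2^n) hq0 hq1 (IH k hk0 hlt)).1
          have e : ((k:ℝ)/2^n)/2 = (k:ℝ)/2^(n+1) := by
            push_cast; ring
          rw [e] at h; exact h
        · have hn : n = 0 := by
            by_contra h
            have : Even (2^n) := (Nat.even_pow).mpr ⟨even_two, h⟩
            rw [← heq] at this
            exact (Nat.not_even_iff_odd.mpr hodd) this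
          subst hn
          have hk1 : k = 1 := by omega
          subst hk1
          have e : ((1:ℕ):ℝ)/2^(0+1) = 1/2 := by norm_num
          rw [e]
          have : G (1/2) = 0 := by
            have e' : (1/2:ℝ)*π = π/2 := by ring
            simp only [hG]
            rw [e', Real.cos_pi_div_two]
            simp
          rw [this]; exact h0
        · set k' := k - 2^n with hk'
          have hk'0 : 0 < k' := by omega
          have hk'2 : k' < 2^n := by
            rw [pow_succ] at hk2; omega
          have hq0 : (0:ℝ) < (k':ℝ)/2^n := by positivity
          have hq1 : (k':ℝ)/2^n < 1 := by
            rw [div_lt_one hpow]; exact_mod_cast hk'2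
          have h := (L1 ((k':ℝ)/2^n) hq0 hq1 (IH k' hk'0 hk'2)).2
          have hcast : (k':ℝ) = (k:ℝ) - 2^n := by
            rw [hk']; push_cast [Nat.cast_sub hgt.le]; ring
          have e : (((k':ℝ)/2^n)+1)/2 = (k:ℝ)/2^(n+1) := by
            rw [hcast, pow_succ]
            have h2n : ((2:ℝ)^n) ≠ 0 := ne_of_gt hpow
            field_simp
            ring
          rw [e] at h; exact h
  have L3 : ∀ q : ℝ, 0 < q → q < 1 → G q ∈ Z := by
    intro q hq0 hq1
    have hπ := pi_pos
    have hs : Real.sin (q*π) ≠ 0 :=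
      ne_of_gt (Real.sin_pos_of_pos_of_lt_pi (by positivity) (by nlinarith))
    have hcont : ContinuousAt G q := by
      apply ContinuousAt.mul continuousAt_const
      apply ContinuousAt.div
      · exact (Real.continuous_cos.comp (continuous_mul_right π)).continuousAt
      · exact (Real.continuous_sin.comp (continuous_mul_right π)).continuousAt
      · exact hs
    set kn : ℕ → ℕ := fun n => Nat.floor (q*2^n) with hkn
    have hq2pos : ∀ n : ℕ, (0:ℝ) ≤ q*2^n := by intro n; positivity
    have hql : ∀ n : ℕ, (kn n : ℝ) ≤ q*2^n := fun n => Nat.floor_le (hq2pos n)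
    have hqg : ∀ n : ℕ, q*2^n < kn n + 1 := fun n => Nat.lt_floor_add_one _
    have hkn_lt : ∀ n, kn n < 2^n := by
      intro n
      rw [hkn]
      have : q*2^n < ((2^n : ℕ) : ℝ) := by
        push_cast
        nlinarith [pow_pos (show (0:ℝ) < 2 by norm_num) n]
      exact Nat.floor_lt (hq2pos n) |>.mpr this
    have hev : ∀ᶠ n : ℕ in atTop, 1 ≤ kn n := by
      have h2 : Tendsto (fun n : ℕ => q*2^n) atTop atTop := by
        apply Tendsto.const_mul_atTop hq0
        exact tendsto_pow_atTop_atTop_of_one_lt (by norm_num : (1:ℝ) < 2)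
      filter_upwards [h2.eventually_ge_atTop 1] with n hn
      rw [hkn]
      exact Nat.le_floor (by exact_mod_cast hn)
    have htend : Tendsto (fun n : ℕ => (kn n : ℝ)/2^n) atTop (𝓝 q) := by
      have hlow : Tendsto (fun n : ℕ => q - (1/2:ℝ)^n) atTop (𝓝 q) := by
        have := tendsto_pow_atTop_nhds_zero_of_lt_one (by norm_num : (0:ℝ) ≤ 1/2)
          (by norm_num : (1/2:ℝ) < 1)
        simpa using tendsto_const_nhds.sub this
      apply tendsto_of_tendsto_of_tendsto_of_le_of_le hlow tendsto_const_nhds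
      · intro n
        have hp : (0:ℝ) < 2^n := by positivity
        have := hqg n
        rw [le_div_iff₀ hp]
        have e : (1/2:ℝ)^n * 2^n = 1 := by
          rw [← mul_pow]; norm_num
        nlinarith
      · intro n
        have hp : (0:ℝ) < 2^n := by positivity
        rw [div_le_iff₀ hp]
        exact hql n
    exact hcl.mem_of_tendsto (hcont.tendsto.comp htend)
      (hev.mono fun n h1 => L2 n (kn n) h1 (hkn_lt n))
  intro σ
  set φ := Real.arctan (σ / Real.sqrt m) with hφ
  have hφ1 : -(π/2) < φ := Real.neg_pi_div_two_lt_arctan _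
  have hφ2 : φ < π/2 := Real.arctan_lt_pi_div_two _
  have hπ := pi_pos
  set q := (π/2 - φ)/π with hq
  have hq0 : 0 < q := by
    rw [hq]
    apply div_pos (by linarith) hπ
  have hq1 : q < 1 := by
    rw [hq, div_lt_one hπ]
    linarith
  have hGq : G q = σ := by
    have e : q*π = π/2 - φ := by
      rw [hq]; field_simp
    simp only [hG, e, Real.cos_pi_div_two_sub, Real.sin_pi_div_two_sub]
    rw [show Real.sin φ / Real.cos φ = Real.tan φ from (Real.tan_eq_sin_div_cos φ).symm]
    rw [hφ, Real.tan_arctan]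
    field_simp
  exact hGq ▸ L3 q hq0 hq1

set_option maxHeartbeats 1600000 in
private lemma oneD (f : ℝ → ℝ) (hpos : ∀ s, 0 ≤ f s)
    (hLip : ∀ s t : ℝ, |f s - f t| ≤ |s - t|)
    (hTri : ∀ s t : ℝ, |s - t| ≤ f s + f t)
    (hA : ∀ s t : ℝ, 0 ≤ t → 4*(t*f s) ≤ f (s+t)^2 + f (s-t)^2)
    (hB : ∀ s t : ℝ, f (s+t) * f (s-t) ≤ f s^2 + t^2) :
    ∃ c m : ℝ, ∀ s, f s^2 = (s+c)^2 + m := by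
  have hmono : ∀ s t : ℝ, s ≤ t → f t - t ≤ f s - s := by
    intro s t hst
    have h := hLip t s
    rw [abs_le] at h
    have h2 : |t - s| = t - s := abs_of_nonneg (by linarith)
    rw [h2] at h
    linarith [h.2]
  have hmono2 : ∀ s t : ℝ, s ≤ t → f (-t) - t ≤ f (-s) - s := by
    intro s t hst
    have h := hLip (-t) (-s)
    rw [abs_le] at h
    have h2 : |(-t) - (-s)| = t - s := by
      rw [show (-t) - (-s) = -(t-s) by ring, abs_neg, abs_of_nonneg (by linarith)]
    rw [h2] at h
    linarith [h.2]
  have hbddc : BddBelow (Set.range fun T : ℝ => f T - T) := by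
    refine ⟨-(f 0), ?_⟩
    rintro _ ⟨T, rfl⟩
    have h := hTri T 0
    have h2 : T ≤ |T - 0| := by
      rw [sub_zero]; exact le_abs_self T
    show -(f 0) ≤ f T - T
    linarith
  have hbddd : BddBelow (Set.range fun T : ℝ => f (-T) - T) := by
    refine ⟨-(f 0), ?_⟩
    rintro _ ⟨T, rfl⟩
    have h := hTri (-T) 0
    have h2 : T ≤ |(-T) - 0| := by
      rw [sub_zero, abs_neg]; exact le_abs_self T
    show -(f 0) ≤ f (-T) - T
    linarith
  have hnec : (Set.range fun T : ℝ => f T - T).Nonempty := ⟨f 0 - 0, ⟨0, rfl⟩⟩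
  have hned : (Set.range fun T : ℝ => f (-T) - T).Nonempty := ⟨f (-0) - 0, ⟨0, rfl⟩⟩
  obtain ⟨c, hc⟩ : ∃ c, c = sInf (Set.range fun T : ℝ => f T - T) := ⟨_, rfl⟩
  obtain ⟨d, hd⟩ : ∃ d, d = sInf (Set.range fun T : ℝ => f (-T) - T) := ⟨_, rfl⟩
  have hcle : ∀ T, c ≤ f T - T := fun T => hc ▸ csInf_le hbddc ⟨T, rfl⟩
  have hdle : ∀ T, d ≤ f (-T) - T := fun T => hd ▸ csInf_le hbddd ⟨T, rfl⟩
  have barrier1 : ∀ s, s + c ≤ f s := by intro s; have := hcle s; linarith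
  have barrier2 : ∀ s, -s + d ≤ f s := by
    intro s; have := hdle (-s); rw [neg_neg] at this; linarith
  have hcd : c + d = 0 := by
    have hge : 0 ≤ c + d := by
      by_contra hlt
      push_neg at hlt
      obtain ⟨ε, hε⟩ : ∃ ε, ε = -(c+d)/3 := ⟨_, rfl⟩
      have hεpos : 0 < ε := by rw [hε]; linarith
      obtain ⟨v1, hv1mem, h1⟩ := exists_lt_of_csInf_lt hnec (show sInf _ < c + ε by rw [← hc]; linarith)
      obtain ⟨v2, hv2mem, h2⟩ := exists_lt_of_csInf_lt hned (show sInf _ < d + ε by rw [← hd]; linarith)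
      obtain ⟨T₁, rfl⟩ := hv1mem
      obtain ⟨T₂, rfl⟩ := hv2mem
      dsimp only at h1 h2
      have e1 : f (max T₁ T₂) - (max T₁ T₂) ≤ f T₁ - T₁ := hmono T₁ _ (le_max_left _ _)
      have e2 : f (-(max T₁ T₂)) - (max T₁ T₂) ≤ f (-T₂) - T₂ := hmono2 T₂ _ (le_max_right _ _)
      have e3 : 2*(max T₁ T₂) ≤ f (max T₁ T₂) + f (-(max T₁ T₂)) := by
        have h := hTri (max T₁ T₂) (-(max T₁ T₂))
        have h4 : 2*(max T₁ T₂) ≤ |(max T₁ T₂) - (-(max T₁ T₂))| := by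
          rw [show (max T₁ T₂) - (-(max T₁ T₂)) = 2*(max T₁ T₂) by ring]
          exact le_abs_self _
        linarith
      linarith
    have hle : c + d ≤ 0 := by
      by_contra hlt
      push_neg at hlt
      obtain ⟨T, hT⟩ : ∃ T, T = max ((f 0^2 + |c*d| + 1)/(c+d)) (|c|+|d|+1) := ⟨_, rfl⟩
      have hT1 : (f 0^2 + |c*d| + 1)/(c+d) ≤ T := hT ▸ le_max_left _ _
      have hT2 : |c|+|d|+1 ≤ T := hT ▸ le_max_right _ _
      have hTc : 0 < T + c := by
        have := neg_abs_le c; have := abs_nonneg d; linarith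
      have hTd : 0 < T + d := by
        have := neg_abs_le d; have := abs_nonneg c; linarith
      have hprod : (T+c)*(T+d) ≤ f 0^2 + T^2 := by
        have h1 := barrier1 T
        have h2 : T + d ≤ f (-T) := by have := barrier2 (-T); linarith
        have h3 : (T+c)*(T+d) ≤ f T * f (-T) :=
          mul_le_mul h1 h2 hTd.le (hpos T)
        have h4 := hB 0 T
        rw [zero_add, zero_sub] at h4
        linarith
      have h5 : f 0^2 + |c*d| + 1 ≤ T * (c+d) := (div_le_iff₀ hlt).mp hT1
      have h6 : -|c*d| ≤ c*d := neg_abs_le _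
      ring_nf at hprod h5
      linarith
    linarith
  -- recentered data
  obtain ⟨F, hFdef⟩ : ∃ F : ℝ → ℝ, ∀ σ, F σ = f (σ - c) := ⟨_, fun _ => rfl⟩
  obtain ⟨H, hHdef⟩ : ∃ H : ℝ → ℝ, ∀ σ, H σ = F σ^2 - σ^2 := ⟨_, fun _ => rfl⟩
  obtain ⟨m, hm⟩ : ∃ m, m = H 0 := ⟨_, rfl⟩
  have hFpos : ∀ σ, 0 ≤ F σ := fun σ => (hFdef σ) ▸ hpos _
  have hHpos : ∀ σ, 0 ≤ H σ := by
    intro σ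
    have h1 := barrier1 (σ - c)
    have h2 := barrier2 (σ - c)
    rw [hHdef, hFdef]
    nlinarith [hcd]
  have hmpos : 0 ≤ m := hm ▸ hHpos 0
  have hFsq : ∀ σ, F σ^2 = σ^2 + H σ := by intro σ; rw [hHdef]; ring
  have hAF : ∀ σ t : ℝ, 0 ≤ t → 4*(t*F σ) ≤ F (σ+t)^2 + F (σ-t)^2 := by
    intro σ t ht
    have h := hA (σ - c) t ht
    have e1 : σ - c + t = σ + t - c := by ring
    have e2 : σ - c - t = σ - t - c := by ring
    rw [e1, e2] at h
    rw [hFdef, hFdef, hFdef]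
    exact h
  have hBF : ∀ σ t : ℝ, F (σ+t) * F (σ-t) ≤ F σ^2 + t^2 := by
    intro σ t
    have h := hB (σ - c) t
    have e1 : σ - c + t = σ + t - c := by ring
    have e2 : σ - c - t = σ - t - c := by ring
    rw [e1, e2] at h
    rw [hFdef, hFdef, hFdef]
    exact h
  have hfc : Continuous f := by
    have : LipschitzWith 1 f := by
      apply LipschitzWith.of_dist_le_mul
      intro a b
      simpa [Real.dist_eq] using hLip a b
    exact this.continuous
  have hFc : Continuous F := by
    have : F = fun σ => f (σ - c) := funext hFdef
    rw [this]
    exact hfc.comp (continuous_id.sub continuous_const)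
  have hHc : Continuous H := by
    have : H = fun σ => F σ^2 - σ^2 := funext hHdef
    rw [this]
    exact (hFc.pow 2).sub (continuous_pow 2)
  have hchild : ∀ z, 2*H z ≤ H (z + F z) + H (z - F z) := by
    intro z
    have h := hAF z (F z) (hFpos z)
    have h1 := hFsq z
    have h2 := hHdef (z + F z)
    have h3 := hHdef (z - F z)
    have h4 := hHdef z
    nlinarith [h]
  have hFbar : ∀ σ, |σ| ≤ F σ := by
    intro σ
    have h := hHpos σ
    rw [hHdef] at h
    have h2 := hFpos σ
    rcases abs_cases σ with ⟨he, _⟩ | ⟨he, _⟩ <;> nlinarith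
  have hm0 : F 0 ^2 = m := by rw [hm, hHdef]; ring
  have hKbdd : ∀ σ, H σ ≤ 2*m + m^2 + (F 0 + 1)^2 := by
    intro σ
    rcases le_or_gt |σ| 1 with hs | hs
    · have h1 : F σ ≤ F 0 + |σ| := by
        have h := hLip (σ - c) (0 - c)
        have e : (σ - c) - (0 - c) = σ := by ring
        rw [e, abs_le] at h
        rw [zero_sub] at h
        rw [hFdef, hFdef]
        rw [zero_sub]
        linarith [h.2, abs_nonneg σ, le_abs_self σ]
      have h3 : F σ^2 ≤ (F 0 + 1)^2 := by nlinarith [hFpos σ, hFpos 0, abs_nonneg σ]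
      rw [hHdef]
      nlinarith [sq_abs σ, abs_nonneg σ, hmpos, sq_nonneg m]
    · have h1 := hBF 0 σ
      rw [zero_add, zero_sub, hm0] at h1
      have h2 : |σ| ≤ F (-σ) := by
        have := hFbar (-σ); rwa [abs_neg] at this
      have h3 : F σ * |σ| ≤ m + σ^2 := by
        nlinarith [hFpos σ]
      have h4 : σ^2 = |σ|^2 := (sq_abs σ).symm
      have h5 : F σ^2 * |σ|^2 ≤ (m + σ^2)^2 := by
        nlinarith [hFpos σ, abs_nonneg σ, mul_nonneg (hFpos σ) (abs_nonneg σ)]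
      have h7 : 1 ≤ |σ| := hs.le
      have hσ1 : 1 ≤ σ^2 := by nlinarith [h7, abs_nonneg σ]
      have h5' : F σ^2 * σ^2 ≤ (m + σ^2)^2 := by
        rw [show F σ^2 * σ^2 = F σ^2 * |σ|^2 by rw [sq_abs]]
        exact h5
      have key : (F σ^2 - σ^2) * σ^2 ≤ (2*m+m^2) * σ^2 := by
        nlinarith [h5', mul_nonneg (mul_nonneg hmpos hmpos) (sub_nonneg.mpr hσ1)]
      have key2 : F σ^2 - σ^2 ≤ 2*m+m^2 :=
        le_of_mul_le_mul_right key (by linarith)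
      rw [hHdef]
      nlinarith [sq_nonneg (F 0 + 1)]
  obtain ⟨M, hM⟩ : ∃ M, M = sSup (Set.range H) := ⟨_, rfl⟩
  have hbddH : BddAbove (Set.range H) := by
    refine ⟨2*m + m^2 + (F 0 + 1)^2, ?_⟩
    rintro _ ⟨σ, rfl⟩
    exact hKbdd σ
  have hneH : (Set.range H).Nonempty := ⟨H 0, ⟨0, rfl⟩⟩
  have hHleM : ∀ σ, H σ ≤ M := fun σ => hM ▸ le_csSup hbddH ⟨σ, rfl⟩
  have hmleM : m ≤ M := hm ▸ hHleM 0
  have hMeqm : M = m := by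
    rcases le_or_gt M 0 with hM0 | hMpos
    · linarith
    · have hsqM : 0 < Real.sqrt M := Real.sqrt_pos.mpr hMpos
      have hMsq : Real.sqrt M ^2 = M := Real.sq_sqrt hMpos.le
      have hsqMnn := Real.sqrt_nonneg M
      have P1 : ∀ ε : ℝ, 0 < ε → ε < M → ∃ σ, |σ| ≤ Real.sqrt M ∧ M - 2*ε ≤ H σ := by
        intro ε hε hεM
        obtain ⟨v, hvmem, hτ'⟩ := exists_lt_of_lt_csSup hneH (show M - ε < sSup (Set.range H) by rw [← hM]; linarith)
        obtain ⟨τ, rfl⟩ := hvmem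
        have hHτpos : 0 < H τ := by linarith
        have hFτ : F τ^2 = τ^2 + H τ := hFsq τ
        have hsum := hchild τ
        have hrM := hHleM (τ + F τ)
        have hlM := hHleM (τ - F τ)
        have hrlow : M - 2*ε ≤ H (τ + F τ) := by linarith
        have hllow : M - 2*ε ≤ H (τ - F τ) := by linarith
        have hFabs := hFbar τ
        have hτM := hHleM τ
        rcases le_or_gt 0 τ with hτ0 | hτ0
        · refine ⟨τ - F τ, ?_, hllow⟩
          have hsq : F τ^2 ≤ (τ + Real.sqrt M)^2 := by
            nlinarith [mul_nonneg hτ0 hsqMnn, hFτ, hτM, hMsq]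
          have hub : F τ ≤ τ + Real.sqrt M := by
            calc F τ = Real.sqrt (F τ^2) := (Real.sqrt_sq (hFpos τ)).symm
              _ ≤ Real.sqrt ((τ + Real.sqrt M)^2) := Real.sqrt_le_sqrt hsq
              _ = τ + Real.sqrt M := Real.sqrt_sq (by linarith)
          have hlb : τ ≤ F τ := le_trans (le_abs_self τ) hFabs
          rw [abs_le]
          exact ⟨by linarith, by linarith⟩
        · refine ⟨τ + F τ, ?_, hrlow⟩
          have hsq : F τ^2 ≤ (-τ + Real.sqrt M)^2 := by
            nlinarith [mul_nonneg (le_of_lt (neg_pos.mpr hτ0)) hsqMnn, hFτ, hτM, hMsq]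
          have hub : F τ ≤ -τ + Real.sqrt M := by
            calc F τ = Real.sqrt (F τ^2) := (Real.sqrt_sq (hFpos τ)).symm
              _ ≤ Real.sqrt ((-τ + Real.sqrt M)^2) := Real.sqrt_le_sqrt hsq
              _ = -τ + Real.sqrt M := Real.sqrt_sq (by linarith)
          have hlb : -τ ≤ F τ := le_trans (neg_le_abs τ) hFabs
          rw [abs_le]
          exact ⟨by linarith, by linarith⟩
      obtain ⟨σs, hσsmem, hσsmax⟩ :=
        isCompact_Icc.exists_isMaxOn (α := ℝ) (s := Set.Icc (-(Real.sqrt M)) (Real.sqrt M))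
          ⟨0, by constructor <;> linarith⟩
          hHc.continuousOn
      have hσsM : H σs = M := by
        apply le_antisymm (hHleM σs)
        by_contra hlt
        push_neg at hlt
        obtain ⟨ε, hε⟩ : ∃ ε, ε = min ((M - H σs)/3) (M/2) := ⟨_, rfl⟩
        have hε1 : 0 < ε := by
          rw [hε]; apply lt_min <;> linarith
        have hε2 : ε < M := by
          have : ε ≤ M/2 := hε ▸ min_le_right _ _
          linarith
        obtain ⟨σ, hσb, hσl⟩ := P1 ε hε1 hε2
        have hσmem : σ ∈ Set.Icc (-(Real.sqrt M)) (Real.sqrt M) := by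
          rw [abs_le] at hσb; exact ⟨hσb.1, hσb.2⟩
        have hle2 := hσsmax hσmem
        have hε3 : ε ≤ (M - H σs)/3 := hε ▸ min_le_left _ _
        simp only [Set.mem_setOf_eq] at hle2
        linarith
      have hZstep : ∀ z, H z = M → H (z + F z) = M ∧ H (z - F z) = M := by
        intro z hz
        have h := hchild z
        have h1 := hHleM (z + F z)
        have h2 := hHleM (z - F z)
        constructor <;> linarith
      obtain ⟨a, ha0, hastep⟩ : ∃ a : ℕ → ℝ, a 0 = σs ∧ ∀ n, a (n+1) = a n + F (a n) :=
        ⟨fun n => Nat.rec σs (fun _ p => p + F p) n, rfl, fun n => rfl⟩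
      have haM : ∀ n, H (a n) = M := by
        intro n
        induction n with
        | zero => rw [ha0]; exact hσsM
        | succ n IH => rw [hastep]; exact (hZstep (a n) IH).1
      have hFaM : ∀ n, Real.sqrt M ≤ F (a n) := by
        intro n
        have h1 : F (a n)^2 = (a n)^2 + M := by rw [hFsq, haM]
        have h2 : M ≤ F (a n)^2 := by nlinarith [sq_nonneg (a n)]
        calc Real.sqrt M ≤ Real.sqrt (F (a n)^2) := Real.sqrt_le_sqrt (by nlinarith)
          _ = F (a n) := Real.sqrt_sq (hFpos _)
      have hagrow : ∀ n : ℕ, σs + n * Real.sqrt M ≤ a n := by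
        intro n
        induction n with
        | zero => simp [ha0]
        | succ n IH =>
          rw [hastep]
          push_cast
          have := hFaM n
          nlinarith
      have hatop : Tendsto a atTop atTop := by
        apply tendsto_atTop_mono hagrow
        apply tendsto_atTop_add_const_left
        apply Tendsto.atTop_mul_const hsqM
        exact tendsto_natCast_atTop_atTop
      have hbM : ∀ n, H (a n - F (a n)) = M := fun n => (hZstep (a n) (haM n)).2
      have hbprod : ∀ n, (a n - F (a n)) * a (n+1) = -M := by
        intro n
        rw [hastep]
        have h1 : F (a n)^2 = (a n)^2 + M := by rw [hFsq, haM]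
        nlinarith
      have hbtend : Tendsto (fun n => a n - F (a n)) atTop (𝓝 0) := by
        have hatop1 : Tendsto (fun n => a (n+1)) atTop atTop :=
          hatop.comp (tendsto_add_atTop_nat 1)
        have hev : (fun n => a n - F (a n)) =ᶠ[atTop] (fun n => -M / a (n+1)) := by
          filter_upwards [hatop1.eventually_ge_atTop 1] with n hn
          have hne : a (n+1) ≠ 0 := by
            intro h; rw [h] at hn; linarith
          rw [eq_div_iff hne]
          exact hbprod n
        have hdiv : Tendsto (fun n => -M / a (n+1)) atTop (𝓝 0) :=
          Tendsto.div_atTop tendsto_const_nhds hatop1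
        exact Tendsto.congr' hev.symm hdiv
      have htend1 : Tendsto (fun n => H (a n - F (a n))) atTop (𝓝 (H 0)) :=
        (hHc.continuousAt.tendsto).comp hbtend
      have hconst : Tendsto (fun n => H (a n - F (a n))) atTop (𝓝 M) := by
        have : (fun n => H (a n - F (a n))) = fun _ => M := funext hbM
        rw [this]
        exact tendsto_const_nhds
      have := tendsto_nhds_unique htend1 hconst
      rw [← hm] at this
      linarith
  have hHlem : ∀ σ, H σ ≤ m := by intro σ; rw [← hMeqm]; exact hHleM σ
  have hHm : ∀ σ, H σ = m := by
    rcases eq_or_lt_of_le hmpos with hm0 | hmpos'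
    · intro σ
      have h1 := hHlem σ
      have h2 := hHpos σ
      linarith
    · have hcl : IsClosed {σ : ℝ | H σ = m} := isClosed_eq hHc continuous_const
      have h0 : (0:ℝ) ∈ {σ : ℝ | H σ = m} := hm.symm
      have hstep : ∀ z ∈ {σ : ℝ | H σ = m},
          z + Real.sqrt (z^2+m) ∈ {σ : ℝ | H σ = m} ∧
          z - Real.sqrt (z^2+m) ∈ {σ : ℝ | H σ = m} := by
        intro z hz
        have hzm : H z = m := hz
        have hFz : F z = Real.sqrt (z^2+m) := by
          rw [show z^2 + m = F z^2 by rw [hFsq, hzm], Real.sqrt_sq (hFpos z)]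
        have h := hchild z
        have h1 := hHlem (z + F z)
        have h2 := hHlem (z - F z)
        rw [hzm] at h
        constructor
        · show H _ = m
          rw [← hFz]; linarith
        · show H _ = m
          rw [← hFz]; linarith
      exact fun σ => dyadic_aux {σ : ℝ | H σ = m} hcl m hmpos' h0 hstep σ
  refine ⟨c, m, ?_⟩
  intro s
  have h := hHm (s + c)
  rw [hHdef] at h
  have h2 : F (s + c) = f s := by rw [hFdef, add_sub_cancel_right]
  rw [h2] at h
  linarith [h]

/-- If a real normed space satisfies the Ptolemaic inequality, then its norm
satisfies the parallelogram law (hence comes from an inner product). -/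
theorem ptolemaic_normed_space_parallelogram {X : Type*}
    [NormedAddCommGroup X] [NormedSpace ℝ X]
    (hPt : ∀ x1 x2 x3 x4 : X,
      ‖x1 - x2‖ * ‖x3 - x4‖ ≤ ‖x2 - x4‖ * ‖x1 - x3‖ + ‖x1 - x4‖ * ‖x2 - x3‖) :
    ∀ x y : X, ‖x + y‖ ^ 2 + ‖x - y‖ ^ 2 = 2 * ‖x‖ ^ 2 + 2 * ‖y‖ ^ 2 := by
  have hdouble : ∀ w : X, ‖w + w‖ = 2 * ‖w‖ := by
    intro w
    rw [← two_smul ℝ w, norm_smul]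
    simp
  have ptA : ∀ u v : X, 4*(‖u‖*‖v‖) ≤ ‖u+v‖^2 + ‖u-v‖^2 := by
    intro u v
    have h := hPt u (-u) v (-v)
    simp only [sub_neg_eq_add] at h
    rw [hdouble u, hdouble v] at h
    have e2 : ‖-u + v‖ = ‖u - v‖ := by
      rw [show -u + v = -(u-v) by abel, norm_neg]
    have e1 : ‖-u - v‖ = ‖u + v‖ := by
      rw [show -u - v = -(u+v) by abel, norm_neg]
    rw [e2, e1] at h
    nlinarith [h]
  have ptB : ∀ u v : X, ‖u+v‖*‖u-v‖ ≤ ‖u‖^2+‖v‖^2 := by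
    intro u v
    have h := ptA (u+v) (u-v)
    have e1 : (u+v)+(u-v) = u+u := by abel
    have e2 : (u+v)-(u-v) = v+v := by abel
    rw [e1, e2, hdouble u, hdouble v] at h
    nlinarith [h]
  intro x y
  by_cases hy : y = 0
  · subst hy
    simp only [add_zero, sub_zero, norm_zero]
    ring
  · have hw : 0 < ‖y‖ := norm_pos_iff.mpr hy
    obtain ⟨e, he⟩ : ∃ e : X, e = ‖y‖⁻¹ • y := ⟨_, rfl⟩
    have hee : ‖e‖ = 1 := by
      rw [he, norm_smul, norm_inv, norm_norm, inv_mul_cancel₀ hw.ne']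
    have hsm : ∀ t : ℝ, ‖t • e‖ = |t| := by
      intro t
      rw [norm_smul, hee, mul_one, Real.norm_eq_abs]
    obtain ⟨c, m, hf⟩ := oneD (fun s => ‖x + s • e‖)
      (fun s => norm_nonneg _)
      (by
        intro s t
        have h := abs_norm_sub_norm_le (x + s • e) (x + t • e)
        have e1 : (x + s • e) - (x + t • e) = (s - t) • e := by
          rw [sub_smul]; abel
        rw [e1, hsm] at h
        exact h)
      (by
        intro s t
        have h := norm_sub_le (x + s • e) (x + t • e)
        have e1 : (x + s • e) - (x + t • e) = (s - t) • e := by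
          rw [sub_smul]; abel
        rw [e1, hsm] at h
        exact h)
      (by
        intro s t ht
        have h := ptA (x + s • e) (t • e)
        have e1 : (x + s • e) + t • e = x + (s + t) • e := by
          rw [add_smul]; abel
        have e2 : (x + s • e) - t • e = x + (s - t) • e := by
          rw [sub_smul]; abel
        rw [e1, e2, hsm] at h
        rw [abs_of_nonneg ht] at h
        calc 4*(t*‖x + s • e‖) = 4*(‖x + s • e‖*t) := by ring
          _ ≤ _ := h
        )
      (by
        intro s t
        have h := ptB (x + s • e) (t • e)
        have e1 : (x + s • e) + t • e = x + (s + t) • e := by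
          rw [add_smul]; abel
        have e2 : (x + s • e) - t • e = x + (s - t) • e := by
          rw [sub_smul]; abel
        rw [e1, e2, hsm, sq_abs] at h
        exact h)
    have hye : y = ‖y‖ • e := by
      rw [he, smul_smul, mul_inv_cancel₀ hw.ne', one_smul]
    have h1 : ‖x + y‖^2 = (‖y‖+c)^2 + m := by
      have := hf ‖y‖
      rw [← hye] at this
      exact this
    have h2 : ‖x - y‖^2 = (-‖y‖+c)^2 + m := by
      have := hf (-‖y‖)
      rw [neg_smul, ← hye] at this
      rw [sub_eq_add_neg]
      exact this
    have h3 : ‖x‖^2 = (0+c)^2 + m := by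
      have := hf 0
      rw [zero_smul, add_zero] at this
      exact this
    nlinarith [h1, h2, h3]
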